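/- For every ℓ ≥ 1, every type α, and every word ω : Fin ℓ → α, the word-graph G_ω has no bridge if and only if ω has no disjoint split. -/

import Mathlib

/-- The edge relation of the word-graph of `ω`: ordered pairs of distinct adjacent letters. -/
def WordEdge {ℓ : ℕ} {α : Type*} (ω : Fin ℓ → α) (a b : α) : Prop :=
  a ≠ b ∧ ∃ i : ℕ, ∃ h : i + 1 < ℓ, ω ⟨i, Nat.lt_of_succ_lt h⟩ = a ∧ ω ⟨i + 1, h⟩ = b

/-- `(a, b)` is a bridge of the word-graph of `ω`: a unidirectional edge whose removal
disconnects (in the weak sense) the word-graph on the alphabet `Set.range ω`. -/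
def IsBridge {ℓ : ℕ} {α : Type*} (ω : Fin ℓ → α) (a b : α) : Prop :=
  WordEdge ω a b ∧ ¬ WordEdge ω b a ∧
    ∃ c ∈ Set.range ω, ∃ d ∈ Set.range ω,
      ¬ Relation.ReflTransGen
        (fun x y => (WordEdge ω x y ∧ ¬(x = a ∧ y = b)) ∨
                    (WordEdge ω y x ∧ ¬(y = a ∧ x = b))) c d

/-- `j` is a disjoint split of `ω`: `1 ≤ j < ℓ` and the prefix alphabet and suffix
alphabet at `j` are disjoint. -/
def DisjointSplit {ℓ : ℕ} {α : Type*} (ω : Fin ℓ → α) (j : ℕ) : Prop :=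
  1 ≤ j ∧ j < ℓ ∧
    Disjoint {a | ∃ i : Fin ℓ, (i : ℕ) < j ∧ ω i = a}
             {a | ∃ i : Fin ℓ, j ≤ (i : ℕ) ∧ ω i = a}

/-- The word-graph edge relation with the edge `(a, b)` deleted, symmetrized. -/
def Del {ℓ : ℕ} {α : Type*} (ω : Fin ℓ → α) (a b : α) (x y : α) : Prop :=
  (WordEdge ω x y ∧ ¬(x = a ∧ y = b)) ∨ (WordEdge ω y x ∧ ¬(y = a ∧ x = b))

lemma del_symm {ℓ : ℕ} {α : Type*} (ω : Fin ℓ → α) (a b : α) :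
    Symmetric (Del ω a b) := fun _ _ h => h.symm

/-- Each consecutive pair of letters is either the occurrence of the deleted edge,
or the two letters are connected in the deleted graph. -/
lemma walk_step {ℓ : ℕ} {α : Type*} (ω : Fin ℓ → α) (a b : α) (i : ℕ) (h : i + 1 < ℓ) :
    (ω ⟨i, Nat.lt_of_succ_lt h⟩ = a ∧ ω ⟨i + 1, h⟩ = b) ∨
      Relation.ReflTransGen (Del ω a b) (ω ⟨i, Nat.lt_of_succ_lt h⟩) (ω ⟨i + 1, h⟩) := by
  by_cases heq : ω ⟨i, Nat.lt_of_succ_lt h⟩ = ω ⟨i + 1, h⟩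
  · exact Or.inr (heq ▸ Relation.ReflTransGen.refl)
  by_cases hab : ω ⟨i, Nat.lt_of_succ_lt h⟩ = a ∧ ω ⟨i + 1, h⟩ = b
  · exact Or.inl hab
  · exact Or.inr (Relation.ReflTransGen.single (Or.inl ⟨⟨heq, i, h, rfl, rfl⟩, hab⟩))

/-- A word-graph has no bridge iff the word has no disjoint split. -/
theorem no_bridge_iff_no_disjointSplit {ℓ : ℕ} {α : Type*} (hℓ : 1 ≤ ℓ) (ω : Fin ℓ → α) :
    (¬ ∃ a b : α, IsBridge ω a b) ↔ ¬ ∃ j : ℕ, DisjointSplit ω j := by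
  rw [not_iff_not]
  have Rsymm : ∀ a b : α, Symmetric (Relation.ReflTransGen (Del ω a b)) :=
    fun a b => have : Std.Symm (Del ω a b) := ⟨del_symm ω a b⟩; fun x y h => Std.Symm.symm x y h
  constructor
  · -- bridge ⇒ split
    rintro ⟨a, b, hEab, hnEba, c, hc, d, hd, hcd⟩
    classical
    have hcd' : ¬ Relation.ReflTransGen (Del ω a b) c d := hcd
    have hex : ∃ i : ℕ, ∃ h : i + 1 < ℓ,
        ω ⟨i, Nat.lt_of_succ_lt h⟩ = a ∧ ω ⟨i + 1, h⟩ = b := hEab.2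
    obtain ⟨h₀, ha₀, hb₀⟩ := Nat.find_spec hex
    -- the deleted edge does not connect a and b
    have hnRab : ¬ Relation.ReflTransGen (Del ω a b) a b := by
      intro hRab
      have hall : ∀ i (h : i < ℓ),
          Relation.ReflTransGen (Del ω a b) (ω ⟨0, hℓ⟩) (ω ⟨i, h⟩) := by
        intro i
        induction i with
        | zero => intro h; exact Relation.ReflTransGen.refl
        | succ n ih =>
          intro h
          rcases walk_step ω a b n h with hocc | hstep
          · refine (ih (Nat.lt_of_succ_lt h)).trans ?_
            rw [hocc.1, hocc.2]; exact hRab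
          · exact (ih (Nat.lt_of_succ_lt h)).trans hstep
      obtain ⟨ic, rfl⟩ := hc
      obtain ⟨idd, rfl⟩ := hd
      exact hcd' ((Rsymm a b (hall ic ic.isLt)).trans (hall idd idd.isLt))
    -- prefix letters connect to a
    have hpre : ∀ k i, i + k = Nat.find hex → ∀ h : i < ℓ,
        Relation.ReflTransGen (Del ω a b) (ω ⟨i, h⟩) a := by
      intro k
      induction k with
      | zero =>
        intro i hi h
        obtain rfl : i = Nat.find hex := by omega
        have ha' : ω ⟨Nat.find hex, h⟩ = a := ha₀
        rw [ha']
      | succ n ih =>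
        intro i hi h
        have h1 : i + 1 < ℓ := by omega
        rcases walk_step ω a b i h1 with hocc | hstep
        · exact absurd ⟨h1, hocc.1, hocc.2⟩ (Nat.find_min hex (by omega))
        · have hrec := ih (i + 1) (by omega) h1
          exact Relation.ReflTransGen.trans
            (show Relation.ReflTransGen (Del ω a b) (ω ⟨i, h⟩) (ω ⟨i + 1, h1⟩) from hstep)
            hrec
    -- suffix letters connect to b
    have hsuf : ∀ i, Nat.find hex + 1 ≤ i → ∀ h : i < ℓ,
        Relation.ReflTransGen (Del ω a b) b (ω ⟨i, h⟩) := by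
      intro i hi
      induction i, hi using Nat.le_induction with
      | base =>
        intro h
        have hb' : ω ⟨Nat.find hex + 1, h⟩ = b := hb₀
        rw [hb']
      | succ n hn ih =>
        intro h
        rcases walk_step ω a b n h with hocc | hstep
        · have hb' : ω ⟨n + 1, h⟩ = b := hocc.2
          rw [hb']
        · exact (ih (Nat.lt_of_succ_lt h)).trans hstep
    refine ⟨Nat.find hex + 1, by omega, by omega, ?_⟩
    rw [Set.disjoint_left]
    rintro x ⟨i1, hi1, rfl⟩ ⟨i2, hi2, heq⟩
    have hA : Relation.ReflTransGen (Del ω a b) (ω i1) a := by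
      have := hpre (Nat.find hex - (i1 : ℕ)) (i1 : ℕ) (by omega) i1.isLt
      exact this
    have hB : Relation.ReflTransGen (Del ω a b) b (ω i1) := by
      have := hsuf (i2 : ℕ) hi2 i2.isLt
      rw [show ω ⟨(i2 : ℕ), i2.isLt⟩ = ω i1 from heq] at this
      exact this
    exact hnRab ((Rsymm a b hA).trans (Rsymm a b hB))
  · -- split ⇒ bridge
    rintro ⟨j, hj1, hjℓ, hdisj⟩
    obtain ⟨j', rfl⟩ : ∃ j', j = j' + 1 := ⟨j - 1, by omega⟩
    have hj'ℓ : j' < ℓ := by omega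
    set a := ω ⟨j', hj'ℓ⟩ with hadef
    set b := ω ⟨j' + 1, hjℓ⟩ with hbdef
    have hPQ := Set.disjoint_left.mp hdisj
    have haP : a ∈ {x | ∃ i : Fin ℓ, (i : ℕ) < j' + 1 ∧ ω i = x} :=
      ⟨⟨j', hj'ℓ⟩, Nat.lt_succ_self j', hadef.symm⟩
    have hbQ : b ∈ {x | ∃ i : Fin ℓ, j' + 1 ≤ (i : ℕ) ∧ ω i = x} :=
      ⟨⟨j' + 1, hjℓ⟩, le_refl _, hbdef.symm⟩
    have hne : a ≠ b := by
      intro h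
      exact hPQ haP (by rw [h]; exact hbQ)
    have hEab : WordEdge ω a b := ⟨hne, j', hjℓ, hadef.symm, hbdef.symm⟩
    have hnEba : ¬ WordEdge ω b a := by
      rintro ⟨-, i, h, hib, hia⟩
      by_cases hij : i < j' + 1
      · exact hPQ ⟨⟨i, Nat.lt_of_succ_lt h⟩, hij, hib⟩ hbQ
      · exact hPQ haP ⟨⟨i + 1, h⟩, (by omega : j' + 1 ≤ i + 1), hia⟩
    have hinv : ∀ x, Relation.ReflTransGen (Del ω a b) a x →
        x ∈ {x | ∃ i : Fin ℓ, (i : ℕ) < j' + 1 ∧ ω i = x} := by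
      intro x hx
      induction hx with
      | refl => exact haP
      | tail _ hS ih =>
        rcases hS with ⟨⟨hne', i, h, him, hiy⟩, hnab⟩ | ⟨⟨hne', i, h, hiy, him⟩, hnab⟩
        · -- edge from middle m to new letter y
          have hiltj : i < j' + 1 := by
            by_contra hcon
            exact hPQ ih ⟨⟨i, Nat.lt_of_succ_lt h⟩, (by omega : j' + 1 ≤ i), him⟩
          by_cases h2 : i + 1 < j' + 1
          · exact ⟨⟨i + 1, h⟩, h2, hiy⟩
          · have hij' : i = j' := by omega
            subst hij'
            exact absurd ⟨him.symm, hiy.symm⟩ hnab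
        · -- edge from new letter y to middle m
          have hiltj : i + 1 < j' + 1 := by
            by_contra hcon
            exact hPQ ih ⟨⟨i + 1, h⟩, (by omega : j' + 1 ≤ i + 1), him⟩
          exact ⟨⟨i, Nat.lt_of_succ_lt h⟩, (by omega : i < j' + 1), hiy⟩
    refine ⟨a, b, hEab, hnEba, a, ⟨⟨j', hj'ℓ⟩, hadef.symm⟩, b, ⟨⟨j' + 1, hjℓ⟩, hbdef.symm⟩, ?_⟩
    intro hRab
    exact hPQ (hinv b hRab) hbQ
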